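/- With X and X* the complementary vector fields X(ζ,t) = [η(ζ)/(η(ζ)+η'(γ(t)−ζ))]·γ'(t) and X*(ζ,t) = [η'(ζ)/(η'(ζ)+η(γ(t)−ζ))]·γ'(t) (where η(ζ) = dist(ζ, Ω), η'(ζ) = dist(ζ, Ω')), let H^s(t) solve dH^s/dt = X(H^s, t) and set K^s(t) = γ(t) − H^s(t). Then K^s satisfies dK^s/dt = X*(K^s, t), and for every t, |dH^s/dt| + |dK^s/dt| = |γ'(t)|; consequently ℒ(H^s) + ℒ(K^s) = ℒ(γ). -/

import Mathlib

open Set Metric MeasureTheory intervalIntegral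

/-- The deformation vector field
`X(ζ, t) = [η(ζ) / (η(ζ) + η'(γ(t) − ζ))] · γ'(t)` with `η = dist(·, Ω)`,
`η' = dist(·, Ω')`. -/
noncomputable def Xfield (Ω Ω' : Set ℂ) (γ γd : ℝ → ℂ) (ζ : ℂ) (t : ℝ) : ℂ :=
  (Metric.infDist ζ Ω / (Metric.infDist ζ Ω + Metric.infDist (γ t - ζ) Ω')) • γd t

/-- The complementary vector field
`X*(ζ, t) = [η'(ζ) / (η'(ζ) + η(γ(t) − ζ))] · γ'(t)`. -/
noncomputable def Xstarfield (Ω Ω' : Set ℂ) (γ γd : ℝ → ℂ) (ζ : ℂ) (t : ℝ) : ℂ :=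
  (Metric.infDist ζ Ω' / (Metric.infDist ζ Ω' + Metric.infDist (γ t - ζ) Ω)) • γd t

/-- If `H` solves `dH/dt = X(H, t)` then `K(t) = γ(t) − H(t)` solves
`dK/dt = X*(K, t)`, the speeds add up to `|γ'(t)|`, and hence the lengths add
up: `ℒ(H) + ℒ(K) = ℒ(γ)`. -/
theorem complementary_flow
    (Ω Ω' : Set ℂ) (hΩ : Ω.Finite) (hΩ' : Ω'.Finite)
    (hΩne : Ω.Nonempty) (hΩ'ne : Ω'.Nonempty)
    (γ γd : ℝ → ℂ)
    (hγ : ∀ t ∈ Set.Icc (0 : ℝ) 1, HasDerivAt γ (γd t) t)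
    (hγd : ContinuousOn γd (Set.Icc 0 1))
    (havoid : ∀ t ∈ Set.Icc (0 : ℝ) 1, ∀ a ∈ Ω, ∀ b ∈ Ω', γ t ≠ a + b)
    (H : ℝ → ℂ)
    (hH : ∀ t ∈ Set.Icc (0 : ℝ) 1, HasDerivAt H (Xfield Ω Ω' γ γd (H t) t) t) :
    (∀ t ∈ Set.Icc (0 : ℝ) 1,
      HasDerivAt (fun u => γ u - H u)
        (Xstarfield Ω Ω' γ γd (γ t - H t) t) t) ∧
    (∀ t ∈ Set.Icc (0 : ℝ) 1,
      ‖Xfield Ω Ω' γ γd (H t) t‖ + ‖Xstarfield Ω Ω' γ γd (γ t - H t) t‖ = ‖γd t‖) ∧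
    ((∫ t in (0 : ℝ)..1, ‖Xfield Ω Ω' γ γd (H t) t‖) +
        (∫ t in (0 : ℝ)..1, ‖Xstarfield Ω Ω' γ γd (γ t - H t) t‖) =
      ∫ t in (0 : ℝ)..1, ‖γd t‖) := by
  have hΩc : IsClosed Ω := hΩ.isClosed
  have hΩ'c : IsClosed Ω' := hΩ'.isClosed
  -- positivity of the denominator
  have hpos : ∀ t ∈ Set.Icc (0 : ℝ) 1,
      0 < Metric.infDist (H t) Ω + Metric.infDist (γ t - H t) Ω' := by
    intro t ht
    rcases lt_or_eq_of_le (add_nonneg (Metric.infDist_nonneg)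
      (Metric.infDist_nonneg) :
        (0:ℝ) ≤ Metric.infDist (H t) Ω + Metric.infDist (γ t - H t) Ω') with h | h
    · exact h
    · exfalso
      have h1 : Metric.infDist (H t) Ω = 0 ∧ Metric.infDist (γ t - H t) Ω' = 0 := by
        constructor <;> nlinarith [Metric.infDist_nonneg (x := H t) (s := Ω),
          Metric.infDist_nonneg (x := γ t - H t) (s := Ω')]
      have hm1 : H t ∈ Ω := (hΩc.mem_iff_infDist_zero hΩne).2 h1.1
      have hm2 : γ t - H t ∈ Ω' := (hΩ'c.mem_iff_infDist_zero hΩ'ne).2 h1.2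
      exact havoid t ht (H t) hm1 (γ t - H t) hm2 (by ring)
  -- derivative statement
  have hderiv : ∀ t ∈ Set.Icc (0 : ℝ) 1,
      HasDerivAt (fun u => γ u - H u) (Xstarfield Ω Ω' γ γd (γ t - H t) t) t := by
    intro t ht
    have h := (hγ t ht).sub (hH t ht)
    have heq : γd t - Xfield Ω Ω' γ γd (H t) t = Xstarfield Ω Ω' γ γd (γ t - H t) t := by
      set a := Metric.infDist (H t) Ω with ha
      set b := Metric.infDist (γ t - H t) Ω' with hb
      have hab : a + b ≠ 0 := ne_of_gt (hpos t ht)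
      simp only [Xfield, Xstarfield, ← ha, ← hb]
      rw [show γ t - (γ t - H t) = H t by ring, ← ha]
      have h1 : γd t - (a / (a + b)) • γd t = (1 - a / (a + b)) • γd t := by
        rw [sub_smul, one_smul]
      rw [h1]
      congr 1
      rw [add_comm b a]
      field_simp
      ring
    rw [← heq]; exact h
  -- norm additivity
  have hnorm : ∀ t ∈ Set.Icc (0 : ℝ) 1,
      ‖Xfield Ω Ω' γ γd (H t) t‖ + ‖Xstarfield Ω Ω' γ γd (γ t - H t) t‖ = ‖γd t‖ := by
    intro t ht
    set a := Metric.infDist (H t) Ω with ha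
    set b := Metric.infDist (γ t - H t) Ω' with hb
    have hab : a + b ≠ 0 := ne_of_gt (hpos t ht)
    have ha0 : (0:ℝ) ≤ a := Metric.infDist_nonneg
    have hb0 : (0:ℝ) ≤ b := Metric.infDist_nonneg
    simp only [Xfield, Xstarfield, ← ha, ← hb]
    rw [show γ t - (γ t - H t) = H t by ring, ← ha]
    rw [norm_smul, norm_smul]
    rw [Real.norm_of_nonneg (div_nonneg ha0 (by positivity)),
        Real.norm_of_nonneg (div_nonneg hb0 (by positivity))]
    have : a / (a + b) + b / (b + a) = 1 := by
      rw [add_comm b a]; field_simp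
    nlinarith [norm_nonneg (γd t)]
  refine ⟨hderiv, hnorm, ?_⟩
  -- continuity of H and γ on Icc
  have hHc : ContinuousOn H (Set.Icc 0 1) := fun t ht =>
    (hH t ht).continuousAt.continuousWithinAt
  have hγc : ContinuousOn γ (Set.Icc 0 1) := fun t ht =>
    (hγ t ht).continuousAt.continuousWithinAt
  have hcont1 : ContinuousOn (fun t => ‖Xfield Ω Ω' γ γd (H t) t‖) (Set.Icc 0 1) := by
    apply ContinuousOn.norm
    unfold Xfield
    apply ContinuousOn.fun_smul
    · apply ContinuousOn.div
      · exact continuous_infDist_pt Ω |>.comp_continuousOn hHc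
      · exact ((continuous_infDist_pt Ω).comp_continuousOn hHc).add
          ((continuous_infDist_pt Ω').comp_continuousOn (hγc.sub hHc))
      · intro t ht; exact ne_of_gt (hpos t ht)
    · exact hγd
  have hcont2 : ContinuousOn (fun t => ‖Xstarfield Ω Ω' γ γd (γ t - H t) t‖)
      (Set.Icc 0 1) := by
    apply ContinuousOn.norm
    unfold Xstarfield
    apply ContinuousOn.fun_smul
    · apply ContinuousOn.div
      · exact (continuous_infDist_pt Ω').comp_continuousOn (hγc.sub hHc)
      · apply ContinuousOn.add
        · exact (continuous_infDist_pt Ω').comp_continuousOn (hγc.sub hHc)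
        · have : ContinuousOn (fun t => γ t - (γ t - H t)) (Set.Icc 0 1) :=
            hγc.sub (hγc.sub hHc)
          exact (continuous_infDist_pt Ω).comp_continuousOn this
      · intro t ht
        have := hpos t ht
        rw [show γ t - (γ t - H t) = H t by ring]
        linarith
    · exact hγd
  have huIcc : Set.uIcc (0:ℝ) 1 = Set.Icc 0 1 := Set.uIcc_of_le zero_le_one
  have hi1 : IntervalIntegrable (fun t => ‖Xfield Ω Ω' γ γd (H t) t‖) volume 0 1 :=
    hcont1.intervalIntegrable_of_Icc zero_le_one
  have hi2 : IntervalIntegrable (fun t => ‖Xstarfield Ω Ω' γ γd (γ t - H t) t‖)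
      volume 0 1 := hcont2.intervalIntegrable_of_Icc zero_le_one
  rw [← intervalIntegral.integral_add hi1 hi2]
  apply intervalIntegral.integral_congr
  intro t ht
  rw [huIcc] at ht
  exact hnorm t ht
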